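/- Let R = ⊕_{j∈(1/2)ℕ} R[j] be a graded vector space with an associative product ∘ and a linear functional T vanishing on R[j] for j > 0, with T(1)=1, such that T is a supertrace for the supergrading (even = integer degrees, odd = half-integer degrees) and such that the pairing Q(φ,ψ) = T(φ∘ψ) is non-degenerate. If additionally R[j]∘R[k] ⊆ ⊕_{p≤j+k} R[p], then R[j]∘R[k] ⊆ ⊕_{|j-k| ≤ p ≤ j+k} R[p]. -/

import Mathlib

/-- Let `R = ⊕_{j∈(1/2)ℕ} R[j]` (grading encoded by `n : ℕ`, `n` twice the degree) with an
associative unital product `∘` and a linear functional `T` vanishing on `R[j]` for `j > 0`,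
`T(1) = 1`, such that `T` is a supertrace for the supergrading (even = integer degrees,
odd = half-integer degrees) and the pairing `Q(φ,ψ) = T(φ∘ψ)` is non-degenerate and
orthogonal for the grading.  If `R[j]∘R[k] ⊆ ⊕_{p ≤ j+k} R[p]` then in fact
`R[j]∘R[k] ⊆ ⊕_{|j-k| ≤ p ≤ j+k} R[p]`. -/
theorem stmt_13 (R : Type*) [AddCommGroup R] [Module ℂ R]
    (Rdeg : ℕ → Submodule ℂ R)
    (hinternal : DirectSum.IsInternal Rdeg)
    (c : R →ₗ[ℂ] R →ₗ[ℂ] R) (one : R)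
    (hassoc : ∀ a b d : R, c (c a b) d = c a (c b d))
    (hone_deg : one ∈ Rdeg 0)
    (honeL : ∀ a : R, c one a = a) (honeR : ∀ a : R, c a one = a)
    (T : R →ₗ[ℂ] ℂ)
    (hT1 : T one = 1)
    (hT0 : ∀ n : ℕ, 0 < n → ∀ x ∈ Rdeg n, T x = 0)
    (hsuper : ∀ j k : ℕ, ∀ x ∈ Rdeg j, ∀ y ∈ Rdeg k,
      T (c x y) = (-1 : ℂ) ^ (j * k) * T (c y x))
    (horth : ∀ j k : ℕ, j ≠ k → ∀ x ∈ Rdeg j, ∀ y ∈ Rdeg k, T (c x y) = 0)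
    (hnondeg : ∀ a : R, (∀ b : R, T (c a b) = 0) → a = 0)
    (hupper : ∀ j k : ℕ, ∀ x ∈ Rdeg j, ∀ y ∈ Rdeg k,
      c x y ∈ ⨆ (p : ℕ) (_ : p ≤ j + k), Rdeg p) :
    ∀ j k : ℕ, ∀ x ∈ Rdeg j, ∀ y ∈ Rdeg k,
      c x y ∈ ⨆ (p : ℕ) (_ : Nat.dist j k ≤ p ∧ p ≤ j + k), Rdeg p := by
  classical
  letI := hinternal.chooseDecomposition
  -- the projection onto the degree-`s` component, as a linear map `R →ₗ[ℂ] R`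
  set π : ℕ → R →ₗ[ℂ] R := fun s =>
    (Rdeg s).subtype ∘ₗ (DFinsupp.lapply s : (DirectSum ℕ fun i => Rdeg i) →ₗ[ℂ] Rdeg s) ∘ₗ
      (DirectSum.decomposeLinearEquiv Rdeg).toLinearMap with hπ
  have hπ_apply : ∀ (s : ℕ) (z : R), π s z = (DirectSum.decompose Rdeg z s : R) :=
    fun s z => rfl
  have hπ_mem : ∀ (s : ℕ) (z : R), π s z ∈ Rdeg s :=
    fun s z => (DirectSum.decompose Rdeg z s).2
  have hπ_same : ∀ (s : ℕ), ∀ z ∈ Rdeg s, π s z = z := fun s z hz => by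
    rw [hπ_apply, DirectSum.decompose_of_mem_same Rdeg hz]
  have hπ_ne : ∀ (p s : ℕ), p ≠ s → ∀ z ∈ Rdeg p, π s z = 0 := fun p s h z hz => by
    rw [hπ_apply, DirectSum.decompose_of_mem_ne Rdeg hz h]
  have htop : (⨆ i, Rdeg i) = ⊤ := hinternal.submodule_iSup_eq_top
  -- extensionality: two linear functionals agreeing on each graded piece agree
  have hext : ∀ (F G : R →ₗ[ℂ] ℂ), (∀ n : ℕ, ∀ z ∈ Rdeg n, F z = G z) → ∀ z, F z = G z := by
    intro F G h z
    have hz : z ∈ (⊤ : Submodule ℂ R) := Submodule.mem_top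
    rw [← htop] at hz
    refine Submodule.iSup_induction (motive := fun w => F w = G w) Rdeg hz h (by simp) ?_
    intro a b ha hb; simp [map_add, ha, hb]
  -- L1 : `T (c z w) = T (c (π s z) w)` for `w ∈ Rdeg s`
  have L1 : ∀ (s : ℕ), ∀ w ∈ Rdeg s, ∀ z : R, T (c z w) = T (c (π s z) w) := by
    intro s w hw
    refine hext (T ∘ₗ c.flip w) ((T ∘ₗ c.flip w) ∘ₗ π s) ?_
    intro n z hz
    rcases eq_or_ne n s with rfl | hns
    · simp [hπ_same n z hz]
    · have h1 : T (c z w) = 0 := horth n s hns z hz w hw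
      simp [h1, hπ_ne n s hns z hz]
  -- L2 : `T (c w z) = T (c w (π s z))` for `w ∈ Rdeg s`
  have L2 : ∀ (s : ℕ), ∀ w ∈ Rdeg s, ∀ z : R, T (c w z) = T (c w (π s z)) := by
    intro s w hw
    refine hext (T ∘ₗ c w) ((T ∘ₗ c w) ∘ₗ π s) ?_
    intro n z hz
    rcases eq_or_ne n s with rfl | hns
    · simp [hπ_same n z hz]
    · have h1 : T (c w z) = 0 := horth s n (Ne.symm hns) w hw z hz
      simp [h1, hπ_ne n s hns z hz]
  -- L3 : elements of `⨆ (p ≤ m), Rdeg p` have no components in degree `> m`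
  have L3 : ∀ (m s : ℕ), m < s → ∀ z ∈ (⨆ (p : ℕ) (_ : p ≤ m), Rdeg p), π s z = 0 := by
    intro m s hms z hz
    have hle : (⨆ (p : ℕ) (_ : p ≤ m), Rdeg p) ≤ LinearMap.ker (π s) := by
      refine iSup_le fun p => iSup_le fun hp => ?_
      intro w hw
      exact LinearMap.mem_ker.mpr (hπ_ne p s (by omega) w hw)
    exact LinearMap.mem_ker.mp (hle hz)
  intro j k x hx y hy
  set z : R := c x y with hzdef
  -- key vanishing of components outside the window
  have key : ∀ s : ℕ, ¬(Nat.dist j k ≤ s ∧ s ≤ j + k) → π s z = 0 := by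
    intro s hs
    rcases (not_and_or.mp hs) with hlow | hhigh
    · -- s < Nat.dist j k
      have hd : s < Nat.dist j k := by omega
      apply hnondeg
      intro b
      have hwmem := hπ_mem s b
      set w : R := π s b with hwdef
      have step1 : T (c (π s z) b) = T (c (π s z) w) := L2 s (π s z) (hπ_mem s z) b
      have step2 : T (c z w) = T (c (π s z) w) := L1 s w hwmem z
      rcases le_total j k with hjk | hkj
      · -- j ≤ k, so s + j < k : cycle to the right
        have hsk : s + j < k := by
          have := Nat.dist_eq_sub_of_le hjk; omega
        have h4 : T (c (π s z) w) = (-1 : ℂ) ^ (s * s) * T (c w (π s z)) :=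
          hsuper s s (π s z) (hπ_mem s z) w hwmem
        have h5 : T (c w z) = T (c w (π s z)) := L2 s w hwmem z
        have h6 : T (c w z) = T (c (c w x) y) := by
          rw [hzdef, ← hassoc w x y]
        have h7 : T (c (c w x) y) = T (c (π k (c w x)) y) := L1 k y hy (c w x)
        have h8 : π k (c w x) = 0 :=
          L3 (s + j) k hsk (c w x) (hupper s j w hwmem x hx)
        rw [step1, h4, ← h5, h6, h7, h8]
        simp
      · -- k ≤ j, so s + k < j : cycle to the left
        have hsk : k + s < j := by
          have := Nat.dist_eq_sub_of_le_right hkj; omega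
        have h6 : T (c z w) = T (c x (c y w)) := by
          rw [hzdef, hassoc x y w]
        have h7 : T (c x (c y w)) = T (c x (π j (c y w))) := L2 j x hx (c y w)
        have h8 : π j (c y w) = 0 :=
          L3 (k + s) j hsk (c y w) (hupper k s y hy w hwmem)
        rw [step1, ← step2, h6, h7, h8]
        simp
    · -- j + k < s : use the upper bound hypothesis
      exact L3 (j + k) s (by omega) z (hupper j k x hx y hy)
  -- assemble: `z` is the sum of its components, each of which lies in the target
  have hsum := DirectSum.sum_support_decompose Rdeg z
  rw [← hsum]
  refine Submodule.sum_mem _ ?_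
  intro i _
  by_cases hi : Nat.dist j k ≤ i ∧ i ≤ j + k
  · exact Submodule.mem_iSup_of_mem i (Submodule.mem_iSup_of_mem hi
      (DirectSum.decompose Rdeg z i).2)
  · have h0 : ((DirectSum.decompose Rdeg z i : Rdeg i) : R) = 0 := by
      rw [← hπ_apply, key i hi]
    rw [h0]
    exact Submodule.zero_mem _
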